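/- arXiv:2601.06951 — 5 statements merged into one kernel-verified Lean document; each statement's English description precedes it below -/
import Mathlib

section
/- Let c > 0 and let F : [0, T] → ℝ be a continuous nonpositive function. If θ : [0, T] → ℝ satisfies θ'' + F·θ = 0 with θ(0) = 1 and θ'(0) = −c, and T ≤ 1/c, then θ(t) ≥ 1 − c·t for all t ∈ [0, T]. -/
open Real Set

/-- If `θ'' + F·θ = 0` on `[0,T]` with `F ≤ 0` continuous, `θ(0) = 1`, `θ'(0) = -c`,
`c > 0` and `T ≤ 1/c`, then `θ(t) ≥ 1 - c·t` on `[0,T]`. -/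
theorem stmt_0 (c T : ℝ) (hc : 0 < c) (hT : 0 < T) (hTc : T ≤ 1 / c)
    (F θ θ' : ℝ → ℝ)
    (hFcont : ContinuousOn F (Icc 0 T))
    (hFnonpos : ∀ t ∈ Icc 0 T, F t ≤ 0)
    (hθ : ∀ t ∈ Icc 0 T, HasDerivAt θ (θ' t) t)
    (hθ' : ∀ t ∈ Icc 0 T, HasDerivAt θ' (-(F t * θ t)) t)
    (hθ0 : θ 0 = 1) (hθ'0 : θ' 0 = -c) :
    ∀ t ∈ Icc 0 T, θ t ≥ 1 - c * t := by
  have hθcont : ContinuousOn θ (Icc 0 T) := fun x hx =>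
    ((hθ x hx).continuousAt).continuousWithinAt
  -- Helper: if θ ≥ 0 on [0,b] ⊆ [0,T], then θ t ≥ 1 - c t on [0,b].
  have key : ∀ b ∈ Icc (0:ℝ) T, (∀ s ∈ Icc (0:ℝ) b, 0 ≤ θ s) →
      ∀ t ∈ Icc (0:ℝ) b, 1 - c * t ≤ θ t := by
    intro b hb hpos t ht
    have hsub : Icc (0:ℝ) b ⊆ Icc 0 T := Icc_subset_Icc le_rfl hb.2
    have hθ'cont : ContinuousOn θ' (Icc 0 b) := fun x hx =>
      ((hθ' x (hsub hx)).continuousAt).continuousWithinAt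
    have hmono : MonotoneOn θ' (Icc 0 b) := by
      apply monotoneOn_of_deriv_nonneg (convex_Icc 0 b) hθ'cont
      · intro x hx
        rw [interior_Icc] at hx
        exact ((hθ' x (hsub (Ioo_subset_Icc_self hx))).differentiableAt).differentiableWithinAt
      intro x hx
      rw [interior_Icc] at hx
      have hxI : x ∈ Icc (0:ℝ) b := Ioo_subset_Icc_self hx
      rw [(hθ' x (hsub hxI)).deriv]
      have h1 := hFnonpos x (hsub hxI)
      nlinarith [hpos x hxI]
    have hθ'ge : ∀ x ∈ Icc (0:ℝ) b, -c ≤ θ' x := by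
      intro x hx
      have h0 : (0:ℝ) ∈ Icc (0:ℝ) b := ⟨le_rfl, hb.1.trans (le_of_eq rfl) |>.trans (le_refl b) |>.trans (le_refl b)⟩
      have := hmono ⟨le_rfl, hx.1.trans hx.2⟩ hx hx.1
      rw [hθ'0] at this
      exact this
    have hg : MonotoneOn (fun s => θ s + c * s) (Icc 0 b) := by
      apply monotoneOn_of_deriv_nonneg (convex_Icc 0 b)
      · exact ContinuousOn.add (hθcont.mono hsub)
          ((continuous_const.mul continuous_id).continuousOn)
      · intro x hx
        rw [interior_Icc] at hx
        have hxI : x ∈ Icc (0:ℝ) b := Ioo_subset_Icc_self hx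
        have h2 : HasDerivAt (fun s : ℝ => c * s) c x := by
          simpa using (hasDerivAt_id x).const_mul c
        exact (((hθ x (hsub hxI)).add h2).differentiableAt).differentiableWithinAt
      · intro x hx
        rw [interior_Icc] at hx
        have hxI : x ∈ Icc (0:ℝ) b := Ioo_subset_Icc_self hx
        have hd : HasDerivAt (fun s => θ s + c * s) (θ' x + c) x := by
          have h2 : HasDerivAt (fun s : ℝ => c * s) c x := by
            simpa using (hasDerivAt_id x).const_mul c
          exact (hθ x (hsub hxI)).add h2
        rw [hd.deriv]
        linarith [hθ'ge x hxI]
    have h0mem : (0:ℝ) ∈ Icc (0:ℝ) b := ⟨le_rfl, ht.1.trans ht.2⟩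
    have := hg h0mem ht ht.1
    simp only [mul_zero, add_zero, hθ0] at this
    linarith
  -- Step 1: θ ≥ 0 on [0,T]
  have hnonneg : ∀ t ∈ Icc (0:ℝ) T, 0 ≤ θ t := by
    by_contra h
    push_neg at h
    obtain ⟨t1, ht1, hneg⟩ := h
    -- IVT: a zero exists in [0, t1]
    have hzero : ∃ w ∈ Icc (0:ℝ) t1, θ w = 0 := by
      have hcont1 : ContinuousOn θ (Icc 0 t1) :=
        hθcont.mono (Icc_subset_Icc le_rfl ht1.2)
      have : (0:ℝ) ∈ Icc (θ t1) (θ 0) := ⟨le_of_lt hneg, by rw [hθ0]; norm_num⟩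
      have := intermediate_value_Icc' ht1.1 hcont1 this
      obtain ⟨w, hw, hw0⟩ := this
      exact ⟨w, hw, hw0⟩
    obtain ⟨w, hw, hw0⟩ := hzero
    set S : Set ℝ := Icc 0 T ∩ θ ⁻¹' {0} with hSdef
    have hSne : S.Nonempty := ⟨w, ⟨⟨hw.1, hw.2.trans ht1.2⟩, hw0⟩⟩
    have hSclosed : IsClosed S :=
      hθcont.preimage_isClosed_of_isClosed isClosed_Icc isClosed_singleton
    have hSbdd : BddBelow S := ⟨0, fun x hx => hx.1.1⟩
    set z := sInf S with hz
    have hzS : z ∈ S := hSclosed.csInf_mem hSne hSbdd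
    have hzle : ∀ x ∈ S, z ≤ x := fun x hx => csInf_le hSbdd hx
    have hθz : θ z = 0 := hzS.2
    -- θ ≥ 0 on [0, z]
    have hposz : ∀ s ∈ Icc (0:ℝ) z, 0 ≤ θ s := by
      intro s hs
      by_contra hsneg
      push_neg at hsneg
      have hcont1 : ContinuousOn θ (Icc 0 s) :=
        hθcont.mono (Icc_subset_Icc le_rfl (hs.2.trans hzS.1.2))
      have h0 : (0:ℝ) ∈ Icc (θ s) (θ 0) := ⟨le_of_lt hsneg, by rw [hθ0]; norm_num⟩
      obtain ⟨v, hv, hv0⟩ := intermediate_value_Icc' hs.1 hcont1 h0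
      have hvS : v ∈ S := ⟨⟨hv.1, (hv.2.trans hs.2).trans hzS.1.2⟩, hv0⟩
      have h1 : z ≤ v := hzle v hvS
      have h2 : v = s := le_antisymm hv.2 (hs.2.trans h1)
      rw [h2] at hv0
      linarith
    have hzw : z ≤ w := hzle w ⟨⟨hw.1, hw.2.trans ht1.2⟩, hw0⟩
    have hzt1 : z ≤ t1 := hzw.trans hw.2
    have hbound := key z hzS.1 hposz z ⟨hzS.1.1, le_rfl⟩
    rw [hθz] at hbound
    have hct : T * c ≤ 1 := (le_div_iff₀ hc).mp hTc
    have ht1z : c * t1 ≤ c * z := by nlinarith [ht1.2]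
    have heq : z = t1 := le_antisymm hzt1 (le_of_mul_le_mul_left ht1z hc)
    rw [heq] at hθz
    linarith
  intro t ht
  exact key T ⟨le_of_lt hT, le_rfl⟩ hnonneg t ht
end

section
/- For each c > 0 there exists a unique K₀ ∈ (−∞, 0) such that c·cosh(√|K₀|/c) − √|K₀|·sinh(√|K₀|/c) = c/2. -/
open Real Set

/-- For every `c > 0` there is a unique `K₀ < 0` with
`c cosh(√(-K₀)/c) - √(-K₀) sinh(√(-K₀)/c) = c/2`. -/
theorem stmt_5 (c : ℝ) (hc : 0 < c) :
    ∃! K₀ : ℝ, K₀ < 0 ∧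
      c * Real.cosh (Real.sqrt (-K₀) / c)
        - Real.sqrt (-K₀) * Real.sinh (Real.sqrt (-K₀) / c) = c / 2 := by
  have hc0 : c ≠ 0 := ne_of_gt hc
  set f : ℝ → ℝ := fun x => c * Real.cosh (x / c) - x * Real.sinh (x / c) with hf
  -- derivative
  have hderiv : ∀ x : ℝ, HasDerivAt f (-(x * Real.cosh (x / c) / c)) x := by
    intro x
    have h1 : HasDerivAt (fun x : ℝ => x / c) (1 / c) x := (hasDerivAt_id x).div_const c
    have h2 := h1.cosh
    have h3 := h2.const_mul c
    have h4 := h1.sinh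
    have h5 := (hasDerivAt_id x).mul h4
    have h6 := h3.sub h5
    convert h6 using 1
    · rfl
    · rfl
    · funext y; simp [hf]
    · simp only [id]; field_simp; ring
  have hcont : Continuous f := by
    apply Continuous.sub
    · exact continuous_const.mul (Real.continuous_cosh.comp (continuous_id.div_const c))
    · exact continuous_id.mul (Real.continuous_sinh.comp (continuous_id.div_const c))
  have hanti : StrictAntiOn f (Ici (0:ℝ)) := by
    apply strictAntiOn_of_deriv_neg (convex_Ici 0) hcont.continuousOn
    intro x hx
    rw [interior_Ici] at hx
    rw [(hderiv x).deriv]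
    have hcosh : 0 < Real.cosh (x / c) := Real.cosh_pos (x / c)
    have : 0 < x * Real.cosh (x / c) / c := div_pos (mul_pos hx hcosh) hc
    linarith
  -- values at endpoints
  have hf0 : f 0 = c := by simp [hf]
  have hf2c : f (2 * c) ≤ c / 2 := by
    have h2 : (2 * c) / c = 2 := by field_simp
    have hexp : (3:ℝ) ≤ Real.exp 2 := by
      have := Real.add_one_le_exp (2:ℝ); linarith
    have hexp' : Real.exp (-2) ≤ 1 := Real.exp_le_one_iff.mpr (by norm_num)
    have : f (2 * c) = c * ((Real.exp 2 + Real.exp (-2)) / 2)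
        - 2 * c * ((Real.exp 2 - Real.exp (-2)) / 2) := by
      simp only [hf, h2, Real.cosh_eq, Real.sinh_eq]
    rw [this]
    nlinarith
  -- existence of root
  have hmem : c / 2 ∈ Icc (f (2 * c)) (f 0) := ⟨hf2c, by rw [hf0]; linarith⟩
  obtain ⟨x₀, hx₀mem, hx₀⟩ := intermediate_value_Icc' (by linarith : (0:ℝ) ≤ 2 * c)
    hcont.continuousOn hmem
  have hx₀pos : 0 < x₀ := by
    rcases lt_or_eq_of_le hx₀mem.1 with h | h
    · exact h
    · exfalso; rw [← h] at hx₀; rw [hf0] at hx₀; linarith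
  refine ⟨-(x₀ ^ 2), ⟨by nlinarith, ?_⟩, ?_⟩
  · have hsq : Real.sqrt (-(-(x₀ ^ 2))) = x₀ := by
      rw [neg_neg, Real.sqrt_sq hx₀pos.le]
    rw [hsq]; exact hx₀
  · rintro K ⟨hK, hKeq⟩
    set y := Real.sqrt (-K) with hy
    have hypos : 0 < y := Real.sqrt_pos.mpr (by linarith)
    have hfy : f y = c / 2 := hKeq
    have : y = x₀ := hanti.injOn hypos.le hx₀pos.le (hfy.trans hx₀.symm)
    have hKy : -K = y ^ 2 := by
      rw [hy, Real.sq_sqrt (by linarith : (0:ℝ) ≤ -K)]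
    rw [this] at hKy
    linarith
end

section
/- Let c > 0 and let K₀ < 0 be the unique negative number with c·cosh(√|K₀|/c) − √|K₀|·sinh(√|K₀|/c) = c/2. Then K₀ < −c²/2. -/
open Real Set

lemma sinh_le_mul_cosh {u : ℝ} (hu : 0 ≤ u) : Real.sinh u ≤ u * Real.cosh u := by
  have h : MonotoneOn (fun x : ℝ => x * Real.cosh x - Real.sinh x) (Set.Ici 0) := by
    have hd : ∀ x ∈ interior (Set.Ici (0:ℝ)),
        0 ≤ deriv (fun x : ℝ => x * Real.cosh x - Real.sinh x) x := by
      intro x hx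
      rw [interior_Ici] at hx
      have : deriv (fun x : ℝ => x * Real.cosh x - Real.sinh x) x = x * Real.sinh x := by
        have h1 : HasDerivAt (fun x : ℝ => x * Real.cosh x - Real.sinh x)
            (1 * Real.cosh x + x * Real.sinh x - Real.cosh x) x :=
          ((hasDerivAt_id x).mul (Real.hasDerivAt_cosh x)).sub (Real.hasDerivAt_sinh x)
        rw [h1.deriv]; ring
      rw [this]
      exact mul_nonneg (le_of_lt hx) (Real.sinh_pos_iff.mpr hx).le
    exact monotoneOn_of_deriv_nonneg (convex_Ici 0)
      (Continuous.continuousOn (by continuity)) (fun x hx =>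
        (((differentiable_id.mul Real.differentiable_cosh).sub
          Real.differentiable_sinh) x).differentiableWithinAt) hd
  have := h (Set.self_mem_Ici) (Set.mem_Ici.mpr hu) hu
  simpa using this

/-- If `c > 0` and `K₀ < 0` satisfies
`c cosh(√(-K₀)/c) - √(-K₀) sinh(√(-K₀)/c) = c/2`, then `K₀ < -c²/2`. -/
theorem stmt_6 (c K₀ : ℝ) (hc : 0 < c) (hK₀ : K₀ < 0)
    (heq : c * Real.cosh (Real.sqrt (-K₀) / c)
      - Real.sqrt (-K₀) * Real.sinh (Real.sqrt (-K₀) / c) = c / 2) :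
    K₀ < -c ^ 2 / 2 := by
  by_contra h
  push_neg at h
  set t := Real.sqrt (-K₀) with ht
  have htpos : 0 < t := Real.sqrt_pos.mpr (by linarith)
  have ht2 : t ^ 2 = -K₀ := Real.sq_sqrt (by linarith)
  have ht2le : t ^ 2 ≤ c ^ 2 / 2 := by rw [ht2]; linarith
  set u := t / c with hu
  have hupos : 0 < u := div_pos htpos hc
  have hu2 : u ^ 2 ≤ 1 / 2 := by
    rw [hu, div_pow, div_le_div_iff₀ (by positivity) (by norm_num)]
    nlinarith
  have hcosh : 1 < Real.cosh u := Real.one_lt_cosh.mpr (ne_of_gt hupos)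
  have hsinh : Real.sinh u ≤ u * Real.cosh u := sinh_le_mul_cosh hupos.le
  have htc : t = c * u := by rw [hu, mul_div_assoc', mul_div_cancel_left₀ t hc.ne']
  have key : c / 2 < c * Real.cosh u - t * Real.sinh u := by
    rw [htc]
    have h1 : c * u * Real.sinh u ≤ c * u ^ 2 * Real.cosh u := by
      have := mul_le_mul_of_nonneg_left hsinh (mul_nonneg hc.le hupos.le)
      nlinarith
    have h2 : c * u ^ 2 * Real.cosh u ≤ c * (1 / 2) * Real.cosh u := by
      have hp := Real.cosh_pos u
      nlinarith [mul_le_mul_of_nonneg_left hu2 (mul_pos hc hp).le]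
    nlinarith [Real.cosh_pos u]
  rw [heq] at key
  exact lt_irrefl _ key
end

section
/- For every c > 0 and every K ∈ [−c²/2, 0), the inequality c·cosh(√|K|/c) − √|K|·sinh(√|K|/c) > c + K/c holds. -/
open Real Set

lemma sinh_lt_mul_cosh {x : ℝ} (hx : 0 < x) : Real.sinh x < x * Real.cosh x := by
  have h : StrictMonoOn (fun t : ℝ => t * Real.cosh t - Real.sinh t) (Set.Ici 0) := by
    apply strictMonoOn_of_deriv_pos (convex_Ici 0)
    · fun_prop
    · intro t ht
      simp only [interior_Ici, Set.mem_Ioi] at ht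
      have : HasDerivAt (fun t : ℝ => t * Real.cosh t - Real.sinh t)
          (1 * Real.cosh t + t * Real.sinh t - Real.cosh t) t := by
        exact ((hasDerivAt_id t).mul (Real.hasDerivAt_cosh t)).sub (Real.hasDerivAt_sinh t)
      rw [this.deriv]
      have hs : 0 < Real.sinh t := Real.sinh_pos_iff.2 ht
      nlinarith
  have := h (Set.self_mem_Ici) (Set.mem_Ici.2 hx.le) hx
  simp at this
  linarith

/-- For `c > 0` and `K ∈ [-c²/2, 0)`,
`c cosh(√(-K)/c) - √(-K) sinh(√(-K)/c) > c + K/c`. -/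
theorem stmt_7 (c K : ℝ) (hc : 0 < c) (hK₁ : -c ^ 2 / 2 ≤ K) (hK₂ : K < 0) :
    c * Real.cosh (Real.sqrt (-K) / c)
      - Real.sqrt (-K) * Real.sinh (Real.sqrt (-K) / c) > c + K / c := by
  set x : ℝ := Real.sqrt (-K) / c with hxdef
  have hKpos : 0 < -K := by linarith
  have hs : 0 < Real.sqrt (-K) := Real.sqrt_pos.2 hKpos
  have hx : 0 < x := div_pos hs hc
  have hsq : Real.sqrt (-K) = c * x := by rw [hxdef]; field_simp
  have hx2 : x ^ 2 = -K / c ^ 2 := by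
    have : (c * x) ^ 2 = -K := by rw [← hsq]; exact Real.sq_sqrt hKpos.le
    field_simp at this ⊢; nlinarith
  have hx2le : x ^ 2 ≤ 1 / 2 := by
    rw [hx2, div_le_div_iff₀ (by positivity) (by norm_num)]
    nlinarith
  have hsinh := sinh_lt_mul_cosh hx
  have hcosh : 1 < Real.cosh x := by
    exact Real.one_lt_cosh.2 hx.ne'
  have hKc : K / c = -(c * x ^ 2) := by
    rw [hx2]; field_simp
  rw [hsq, hKc]
  nlinarith [mul_lt_mul_of_pos_left hsinh (mul_pos hc hx),
    mul_pos (mul_pos hc (sub_pos.2 hcosh)) (show (0:ℝ) < 1 - x ^ 2 by linarith)]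
end

section
/- Let c > 0, T ≤ 1/c, F : [0,T] → ℝ continuous and nonpositive, θ the solution of θ'' + Fθ = 0 with θ(0) = 1, θ'(0) = −c, and V(t) = ∫₀ᵗ θ. Then V(t) ≥ 0 for all t ∈ [0,T], V(0) = 0, and V is nondecreasing on [0,T]. -/
open Real Set intervalIntegral

/-- With `c > 0`, `T ≤ 1/c`, `F` continuous nonpositive on `[0,T]`, `θ'' + Fθ = 0`,
`θ(0) = 1`, `θ'(0) = -c`, and `V(t) = ∫₀ᵗ θ`, the function `V` is nonnegative on
`[0,T]`, `V(0) = 0`, and `V` is nondecreasing on `[0,T]`. -/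
theorem stmt_9 (c T : ℝ) (hc : 0 < c) (hT : 0 < T) (hTc : T ≤ 1 / c)
    (F θ θ' : ℝ → ℝ)
    (hFcont : ContinuousOn F (Icc 0 T))
    (hFnonpos : ∀ t ∈ Icc 0 T, F t ≤ 0)
    (hθ : ∀ t ∈ Icc 0 T, HasDerivAt θ (θ' t) t)
    (hθ' : ∀ t ∈ Icc 0 T, HasDerivAt θ' (-(F t * θ t)) t)
    (hθ0 : θ 0 = 1) (hθ'0 : θ' 0 = -c)
    (V : ℝ → ℝ) (hV : ∀ t, V t = ∫ s in (0:ℝ)..t, θ s) :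
    (∀ t ∈ Icc 0 T, 0 ≤ V t) ∧ V 0 = 0 ∧ MonotoneOn V (Icc 0 T) := by
  have hθc : ContinuousOn θ (Icc 0 T) := fun t ht =>
    (hθ t ht).continuousAt.continuousWithinAt
  have hθ'c : ContinuousOn θ' (Icc 0 T) := fun t ht =>
    (hθ' t ht).continuousAt.continuousWithinAt
  have hcT : c * T ≤ 1 := by
    rw [le_div_iff₀ hc] at hTc
    linarith
  -- main claim: θ is nonnegative on [0, T]
  have key : ∀ t ∈ Icc 0 T, 0 ≤ θ t := by
    by_contra h
    push_neg at h
    obtain ⟨t1, ht1, hneg⟩ := h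
    set S : Set ℝ := {t | t ∈ Icc 0 t1 ∧ θ t ≤ 0} with hSdef
    have hne : S.Nonempty := ⟨t1, ⟨ht1.1, le_rfl⟩, hneg.le⟩
    have hbdd : BddBelow S := ⟨0, fun s hs => hs.1.1⟩
    set a := sInf S with ha
    have ha0 : 0 ≤ a := le_csInf hne (fun s hs => hs.1.1)
    have hat1 : a ≤ t1 := csInf_le hbdd ⟨⟨ht1.1, le_rfl⟩, hneg.le⟩
    have haT : a ≤ T := hat1.trans ht1.2
    have haIcc : a ∈ Icc 0 T := ⟨ha0, haT⟩
    -- θ a ≤ 0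
    have hθa : θ a ≤ 0 := by
      by_contra hp
      push_neg at hp
      have hca : ContinuousAt θ a := (hθ a haIcc).continuousAt
      have hev : ∀ᶠ s in nhds a, 0 < θ s := hca.eventually (eventually_gt_nhds hp)
      rw [Metric.eventually_nhds_iff] at hev
      obtain ⟨ε, hε, hball⟩ := hev
      obtain ⟨s, hs, hsa⟩ := exists_lt_of_csInf_lt hne (lt_add_of_pos_right a hε)
      have hsge : a ≤ s := csInf_le hbdd hs
      have : 0 < θ s := hball (by rw [Real.dist_eq, abs_of_nonneg (by linarith)]; linarith)
      linarith [hs.2]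
    -- θ is positive strictly before a
    have hpos : ∀ s, 0 ≤ s → s < a → 0 < θ s := by
      intro s hs0 hsa
      by_contra hp
      push_neg at hp
      have : s ∈ S := ⟨⟨hs0, hsa.le.trans hat1⟩, hp⟩
      exact absurd (csInf_le hbdd this) (not_le.mpr hsa)
    -- θ' is monotone on [0, a]
    have hsub : Icc (0:ℝ) a ⊆ Icc 0 T := Icc_subset_Icc le_rfl haT
    have hmono : MonotoneOn θ' (Icc 0 a) := by
      apply monotoneOn_of_deriv_nonneg (convex_Icc _ _) (hθ'c.mono hsub)
      · intro x hx
        rw [interior_Icc] at hx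
        exact ((hθ' x (hsub ⟨hx.1.le, hx.2.le⟩)).differentiableAt).differentiableWithinAt
      · intro x hx
        rw [interior_Icc] at hx
        have hxT : x ∈ Icc 0 T := hsub ⟨hx.1.le, hx.2.le⟩
        rw [(hθ' x hxT).deriv]
        have h1 : 0 < θ x := hpos x hx.1.le hx.2
        have h2 : F x ≤ 0 := hFnonpos x hxT
        nlinarith
    -- FTC on [0, a]
    have hftc : ∫ s in (0:ℝ)..a, θ' s = θ a - θ 0 := by
      apply intervalIntegral.integral_eq_sub_of_hasDerivAt
      · intro x hx
        rw [uIcc_of_le ha0] at hx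
        exact hθ x (hsub hx)
      · exact (hθ'c.mono (by rw [uIcc_of_le ha0]; exact hsub)).intervalIntegrable
    -- lower bound on the integral
    have hlb : -c * a ≤ ∫ s in (0:ℝ)..a, θ' s := by
      have hmon : (∫ s in (0:ℝ)..a, (-c : ℝ)) ≤ ∫ s in (0:ℝ)..a, θ' s := by
        apply intervalIntegral.integral_mono_on ha0 intervalIntegrable_const
          ((hθ'c.mono (by rw [uIcc_of_le ha0]; exact hsub)).intervalIntegrable)
        intro x hx
        have := hmono ⟨le_rfl, ha0⟩ hx hx.1
        rwa [hθ'0] at this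
      simpa [mul_comm] using hmon
    have h1 : 1 - c * a ≤ θ a := by
      rw [hftc, hθ0] at hlb
      linarith
    -- conclude contradiction
    have hca1 : 1 ≤ c * a := by linarith
    have hca2 : c * a ≤ c * t1 := by nlinarith
    have hct1 : c * t1 ≤ c * T := by nlinarith [ht1.2]
    have ht1a : t1 = a := by nlinarith
    rw [ht1a] at hneg
    linarith
  -- conclusions
  refine ⟨?_, ?_, ?_⟩
  · intro t ht
    rw [hV]
    apply intervalIntegral.integral_nonneg ht.1
    intro s hs
    exact key s ⟨hs.1, hs.2.trans ht.2⟩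
  · rw [hV]; exact intervalIntegral.integral_same
  · intro x hx y hy hxy
    have hix : IntervalIntegrable θ MeasureTheory.volume 0 x :=
      (hθc.mono (by rw [uIcc_of_le hx.1]; exact Icc_subset_Icc le_rfl hx.2)).intervalIntegrable
    have hixy : IntervalIntegrable θ MeasureTheory.volume x y :=
      (hθc.mono (by rw [uIcc_of_le hxy]; exact Icc_subset_Icc hx.1 hy.2)).intervalIntegrable
    have hnn : 0 ≤ ∫ s in x..y, θ s :=
      intervalIntegral.integral_nonneg hxy (fun s hs =>
        key s ⟨hx.1.trans hs.1, hs.2.trans hy.2⟩)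
    rw [hV, hV, ← intervalIntegral.integral_add_adjacent_intervals hix hixy]
    linarith
end
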